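/- Fix integers p ≥ 1 and n ≥ 1 and reals w₁ ≥ 0, w₂ > 0, and 0 < δ ≤ c. Then there exists a constant B ∈ ℝ, depending only on p, n, w₁, w₂, δ and c, such that for all data points x₁, …, xₙ ∈ ℝ^p, all mixture weights π₁, π₂ ≥ 0 with π₁ + π₂ = 1, all means μ₁, μ₂ ∈ ℝ^p, and all symmetric positive definite p×p real matrices Σ₁, Σ₂ with det Σ₁ ≤ det Σ₂, with all eigenvalues of Σ₁ and Σ₂ at most c, and with all eigenvalues of Σ₂ at least δ, the penalized SIA objective satisfies M ≤ B. In particular, the penalized objective remains bounded above as det Σ₁ → 0. -/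

import Mathlib

open Matrix Real

/-- Multivariate Gaussian density
`N(x; μ, S) = (2π)^{-p/2} (det S)^{-1/2} exp(-(1/2)(x-μ)ᵀ S⁻¹ (x-μ))`. -/
noncomputable def gaussDensity {p : ℕ} (x μ : Fin p → ℝ) (S : Matrix (Fin p) (Fin p) ℝ) : ℝ :=
  (2 * Real.pi) ^ (-(p : ℝ) / 2) * S.det ^ (-(1 : ℝ) / 2) *
    Real.exp (-(1 / 2) * ((x - μ) ⬝ᵥ (S⁻¹ *ᵥ (x - μ))))

/-- Closed form of the KL divergence between the Gaussians `N(μ₁, S₁)` and `N(μ₂, S₂)`. -/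
noncomputable def gaussKL {p : ℕ} (μ₁ : Fin p → ℝ) (S₁ : Matrix (Fin p) (Fin p) ℝ)
    (μ₂ : Fin p → ℝ) (S₂ : Matrix (Fin p) (Fin p) ℝ) : ℝ :=
  (1 / 2) * (Real.log (S₂.det / S₁.det) - p + (S₂⁻¹ * S₁).trace +
    (μ₂ - μ₁) ⬝ᵥ (S₂⁻¹ *ᵥ (μ₂ - μ₁)))

/-- The penalized SIA objective for a two-component Gaussian mixture. -/
noncomputable def siaObj {p n : ℕ} (x : Fin n → Fin p → ℝ) (π₁ π₂ : ℝ)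
    (μ₁ μ₂ : Fin p → ℝ) (S₁ S₂ : Matrix (Fin p) (Fin p) ℝ) (w₁ w₂ : ℝ) : ℝ :=
  (∑ i, Real.log (π₁ * gaussDensity (x i) μ₁ S₁ + π₂ * gaussDensity (x i) μ₂ S₂))
    - w₁ * gaussKL μ₁ S₁ μ₂ S₂ - w₂ * gaussKL μ₂ S₂ μ₁ S₁

/-! ### Auxiliary lemmas -/

lemma aux_quad_nonneg {p : ℕ} {S : Matrix (Fin p) (Fin p) ℝ} (hS : S.PosSemidef)
    (v : Fin p → ℝ) : 0 ≤ v ⬝ᵥ (S *ᵥ v) := by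
  simpa using hS.dotProduct_mulVec_nonneg v

lemma aux_trace_nonneg {p : ℕ} {M : Matrix (Fin p) (Fin p) ℝ} (hM : M.PosSemidef) :
    0 ≤ M.trace := by
  rw [Matrix.trace]
  apply Finset.sum_nonneg
  intro i _
  have := hM.dotProduct_mulVec_nonneg (Pi.single i 1)
  simpa [dotProduct, Matrix.mulVec, Pi.single_apply, Matrix.diag] using this

lemma aux_trace_mul_nonneg {p : ℕ} {A B : Matrix (Fin p) (Fin p) ℝ}
    (hA : A.PosSemidef) (hB : B.PosSemidef) : 0 ≤ (A * B).trace := by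
  open scoped MatrixOrder in
  obtain ⟨C, rfl⟩ := CStarAlgebra.nonneg_iff_eq_star_mul_self.mp hB.nonneg
  rw [← Matrix.mul_assoc, Matrix.trace_mul_cycle]
  exact aux_trace_nonneg (hA.mul_mul_conjTranspose_same C)

lemma aux_trace_eq_sum {p : ℕ} {S : Matrix (Fin p) (Fin p) ℝ} (hS : S.IsHermitian) :
    S.trace = ∑ i, hS.eigenvalues i := by
  conv_lhs => rw [hS.spectral_theorem, Unitary.conjStarAlgAut_apply]
  rw [trace_mul_cycle]
  rw [(Matrix.mem_unitaryGroup_iff').mp (hS.eigenvectorUnitary).2]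
  simp [Matrix.trace_diagonal]

lemma aux_logdet_le {p : ℕ} {S : Matrix (Fin p) (Fin p) ℝ} (hS : S.PosDef) :
    Real.log S.det ≤ S.trace - p := by
  have hev : ∀ i, 0 < hS.1.eigenvalues i := hS.eigenvalues_pos
  have hdet : S.det = ∏ i, hS.1.eigenvalues i := by
    simpa using hS.1.det_eq_prod_eigenvalues
  rw [hdet, aux_trace_eq_sum hS.1, Real.log_prod (fun i _ => (hev i).ne')]
  calc ∑ i, Real.log (hS.1.eigenvalues i) ≤ ∑ i, (hS.1.eigenvalues i - 1) :=
        Finset.sum_le_sum fun i _ => Real.log_le_sub_one_of_pos (hev i)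
    _ = (∑ i, hS.1.eigenvalues i) - p := by
        rw [Finset.sum_sub_distrib]; simp

lemma aux_sub_smul_psd {p : ℕ} {S : Matrix (Fin p) (Fin p) ℝ} (hS : S.IsHermitian) {δ : ℝ}
    (h : ∀ i, δ ≤ hS.eigenvalues i) : (S - δ • 1).PosSemidef := by
  have hU := (Matrix.mem_unitaryGroup_iff).mp (hS.eigenvectorUnitary).2
  have key : S - δ • 1 =
      (hS.eigenvectorUnitary : Matrix (Fin p) (Fin p) ℝ) *
        Matrix.diagonal (fun i => hS.eigenvalues i - δ) *
        (star (hS.eigenvectorUnitary : Matrix (Fin p) (Fin p) ℝ)) := by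
    conv_lhs => rw [hS.spectral_theorem]
    have : Matrix.diagonal (fun i => hS.eigenvalues i - δ)
        = Matrix.diagonal (RCLike.ofReal ∘ hS.eigenvalues) - δ • 1 := by
      simp [Matrix.diagonal_sub, Matrix.smul_one_eq_diagonal]
    rw [this, Matrix.mul_sub, Matrix.sub_mul]
    congr 1
    rw [Matrix.mul_smul, Matrix.mul_one, Matrix.smul_mul, hU]
  rw [key]
  exact (Matrix.posSemidef_diagonal_iff.mpr
    (fun i => by simpa using h i)).mul_mul_conjTranspose_same _

lemma aux_det_le {p : ℕ} {S : Matrix (Fin p) (Fin p) ℝ} (hS : S.PosDef) {c : ℝ}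
    (h : ∀ i, hS.1.eigenvalues i ≤ c) : S.det ≤ c ^ p := by
  have hdet : S.det = ∏ i, hS.1.eigenvalues i := by
    simpa using hS.1.det_eq_prod_eigenvalues
  rw [hdet]
  calc ∏ i, hS.1.eigenvalues i ≤ ∏ _i : Fin p, c :=
        Finset.prod_le_prod (fun i _ => (hS.eigenvalues_pos i).le) (fun i _ => h i)
    _ = c ^ p := by simp

lemma aux_det_ge {p : ℕ} {S : Matrix (Fin p) (Fin p) ℝ} (hS : S.PosDef) {δ : ℝ}
    (hδ : 0 ≤ δ) (h : ∀ i, δ ≤ hS.1.eigenvalues i) : δ ^ p ≤ S.det := by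
  have hdet : S.det = ∏ i, hS.1.eigenvalues i := by
    simpa using hS.1.det_eq_prod_eigenvalues
  rw [hdet]
  calc δ ^ p = ∏ _i : Fin p, δ := by simp
    _ ≤ ∏ i, hS.1.eigenvalues i :=
        Finset.prod_le_prod (fun _ _ => hδ) (fun i _ => h i)

lemma aux_smul_posdef {p : ℕ} {S : Matrix (Fin p) (Fin p) ℝ} (hS : S.PosDef) {a : ℝ}
    (ha : 0 < a) : (a • S).PosDef := by
  refine Matrix.PosDef.of_dotProduct_mulVec_pos ?_ ?_
  · show (a • S)ᴴ = a • S
    rw [Matrix.conjTranspose_smul, star_trivial, hS.1.eq]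
  · intro v hv
    have := hS.dotProduct_mulVec_pos hv
    have h2 : star v ⬝ᵥ ((a • S) *ᵥ v) = a * (star v ⬝ᵥ (S *ᵥ v)) := by
      rw [Matrix.smul_mulVec, dotProduct_smul, smul_eq_mul]
    rw [h2]
    exact mul_pos ha this

lemma aux_gauss_le {p : ℕ} (x μ : Fin p → ℝ) {S : Matrix (Fin p) (Fin p) ℝ} (hS : S.PosDef) :
    gaussDensity x μ S ≤ (2 * Real.pi) ^ (-(p : ℝ) / 2) * S.det ^ (-(1 : ℝ) / 2) := by
  unfold gaussDensity
  have hq : 0 ≤ (x - μ) ⬝ᵥ (S⁻¹ *ᵥ (x - μ)) := aux_quad_nonneg hS.inv.posSemidef _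
  have hexp : Real.exp (-(1 / 2) * ((x - μ) ⬝ᵥ (S⁻¹ *ᵥ (x - μ)))) ≤ 1 := by
    rw [Real.exp_le_one_iff]; nlinarith
  have hK : (0:ℝ) ≤ (2 * Real.pi) ^ (-(p : ℝ) / 2) * S.det ^ (-(1 : ℝ) / 2) := by
    have := Real.pi_pos
    have := hS.det_pos
    positivity
  nlinarith [Real.exp_pos (-(1 / 2) * ((x - μ) ⬝ᵥ (S⁻¹ *ᵥ (x - μ))))]

lemma aux_gauss_pos {p : ℕ} (x μ : Fin p → ℝ) {S : Matrix (Fin p) (Fin p) ℝ} (hS : S.PosDef) :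
    0 < gaussDensity x μ S := by
  unfold gaussDensity
  have := Real.pi_pos
  have := hS.det_pos
  positivity

set_option maxHeartbeats 1000000 in
theorem sia_objective_bounded (p n : ℕ) (hp : 1 ≤ p) (hn : 1 ≤ n)
    (w₁ w₂ δ c : ℝ) (hw₁ : 0 ≤ w₁) (hw₂ : 0 < w₂) (hδ : 0 < δ) (hδc : δ ≤ c) :
    ∃ B : ℝ, ∀ (x : Fin n → Fin p → ℝ) (π₁ π₂ : ℝ), 0 ≤ π₁ → 0 ≤ π₂ → π₁ + π₂ = 1 →
      ∀ (μ₁ μ₂ : Fin p → ℝ) (S₁ S₂ : Matrix (Fin p) (Fin p) ℝ)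
        (hS₁ : S₁.PosDef) (hS₂ : S₂.PosDef),
        S₁.det ≤ S₂.det →
        (∀ i, hS₁.1.eigenvalues i ≤ c) →
        (∀ i, hS₂.1.eigenvalues i ≤ c) →
        (∀ i, δ ≤ hS₂.1.eigenvalues i) →
        siaObj x π₁ π₂ μ₁ μ₂ S₁ S₂ w₁ w₂ ≤ B := by
  have hc : 0 < c := hδ.trans_le hδc
  set K : ℝ := (2 * Real.pi) ^ (-(p : ℝ) / 2) with hKdef
  set G : ℝ := 1 + (δ ^ p : ℝ) ^ (-(1 : ℝ) / 2) / ((c ^ p : ℝ) ^ (-(1 : ℝ) / 2)) with hGdef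
  set a : ℝ := w₂ * δ / ((n : ℝ) + w₂) with hadef
  have hnw : (0:ℝ) < (n : ℝ) + w₂ := by positivity
  have ha : 0 < a := by positivity
  have hKpos : 0 < K := by
    have := Real.pi_pos
    positivity
  have hGpos : 0 < G := by positivity
  refine ⟨(n : ℝ) * (Real.log K + Real.log G) + w₁ * p / 2
      + (w₂ / 2) * ((p : ℝ) * Real.log c + p)
      + (((n : ℝ) + w₂) / 2) * (-(p : ℝ) - (p : ℝ) * Real.log a), ?_⟩
  intro x π₁ π₂ hπ₁ hπ₂ hπ μ₁ μ₂ S₁ S₂ hS₁ hS₂ hdet h₁c h₂c h₂δ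
  have hd₁ : 0 < S₁.det := hS₁.det_pos
  have hd₂ : 0 < S₂.det := hS₂.det_pos
  set L₁ : ℝ := Real.log S₁.det with hL₁
  set L₂ : ℝ := Real.log S₂.det with hL₂
  set T : ℝ := (S₁⁻¹).trace with hT
  have hdet₁c : S₁.det ≤ c ^ p := aux_det_le hS₁ h₁c
  have hdet₂δ : δ ^ p ≤ S₂.det := aux_det_ge hS₂ hδ.le h₂δ
  -- Step A : per-point bound on the log term
  have hA : ∀ i, Real.log (π₁ * gaussDensity (x i) μ₁ S₁ + π₂ * gaussDensity (x i) μ₂ S₂)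
      ≤ Real.log K + Real.log G - (1/2) * L₁ := by
    intro i
    set d₁r : ℝ := S₁.det ^ (-(1 : ℝ) / 2) with hd₁r
    set δp : ℝ := (δ ^ p : ℝ) ^ (-(1 : ℝ) / 2) with hδp
    set cp : ℝ := (c ^ p : ℝ) ^ (-(1 : ℝ) / 2) with hcp
    have hd₁rpos : 0 < d₁r := Real.rpow_pos_of_pos hd₁ _
    have hδppos : 0 < δp := Real.rpow_pos_of_pos (by positivity) _
    have hcppos : 0 < cp := Real.rpow_pos_of_pos (by positivity) _
    have hcp_le : cp ≤ d₁r := Real.rpow_le_rpow_of_nonpos hd₁ hdet₁c (by norm_num)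
    have hg₁ : gaussDensity (x i) μ₁ S₁ ≤ K * d₁r := aux_gauss_le _ _ hS₁
    have hg₂ : gaussDensity (x i) μ₂ S₂ ≤ K * δp := by
      refine (aux_gauss_le _ _ hS₂).trans ?_
      have : S₂.det ^ (-(1 : ℝ) / 2) ≤ δp :=
        Real.rpow_le_rpow_of_nonpos (by positivity) hdet₂δ (by norm_num)
      nlinarith
    have hgp₁ : 0 < gaussDensity (x i) μ₁ S₁ := aux_gauss_pos _ _ hS₁
    have hgp₂ : 0 < gaussDensity (x i) μ₂ S₂ := aux_gauss_pos _ _ hS₂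
    have hpos : 0 < π₁ * gaussDensity (x i) μ₁ S₁ + π₂ * gaussDensity (x i) μ₂ S₂ := by
      rcases lt_or_ge 0 π₁ with h | h
      · have := mul_pos h hgp₁
        nlinarith [mul_nonneg hπ₂ hgp₂.le]
      · have hπ₁0 : π₁ = 0 := le_antisymm h hπ₁
        have hπ₂1 : π₂ = 1 := by linarith
        rw [hπ₁0, hπ₂1]; simpa using hgp₂
    have hub : π₁ * gaussDensity (x i) μ₁ S₁ + π₂ * gaussDensity (x i) μ₂ S₂
        ≤ K * d₁r * G := by
      have hπ₁1 : π₁ ≤ 1 := by linarith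
      have hπ₂1 : π₂ ≤ 1 := by linarith
      have h1 : π₁ * gaussDensity (x i) μ₁ S₁ ≤ K * d₁r :=
        ((mul_le_of_le_one_left hgp₁.le hπ₁1).trans hg₁)
      have h2 : π₂ * gaussDensity (x i) μ₂ S₂ ≤ K * δp :=
        ((mul_le_of_le_one_left hgp₂.le hπ₂1).trans hg₂)
      have h3 : δp ≤ d₁r * δp / cp := by
        rw [le_div_iff₀ hcppos]
        have := mul_le_mul_of_nonneg_left hcp_le hδppos.le
        linarith
      have h3' : K * δp ≤ K * (d₁r * δp / cp) :=
        mul_le_mul_of_nonneg_left h3 hKpos.le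
      have hexp : K * d₁r * G = K * d₁r + K * (d₁r * δp / cp) := by
        rw [hGdef]; field_simp
      calc π₁ * gaussDensity (x i) μ₁ S₁ + π₂ * gaussDensity (x i) μ₂ S₂
          ≤ K * d₁r + K * δp := add_le_add h1 h2
        _ ≤ K * d₁r + K * (d₁r * δp / cp) := add_le_add_right h3' _
        _ = K * d₁r * G := hexp.symm
    calc Real.log (π₁ * gaussDensity (x i) μ₁ S₁ + π₂ * gaussDensity (x i) μ₂ S₂)
        ≤ Real.log (K * d₁r * G) := Real.log_le_log hpos hub
      _ = Real.log K + Real.log d₁r + Real.log G := by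
          rw [Real.log_mul (by positivity) hGpos.ne', Real.log_mul hKpos.ne' hd₁rpos.ne']
      _ = Real.log K + Real.log G - (1/2) * L₁ := by
          rw [hd₁r, Real.log_rpow hd₁]; ring
  have h1 : (∑ i, Real.log (π₁ * gaussDensity (x i) μ₁ S₁ + π₂ * gaussDensity (x i) μ₂ S₂))
      ≤ (n : ℝ) * (Real.log K + Real.log G) - ((n : ℝ)/2) * L₁ := by
    calc (∑ i, Real.log (π₁ * gaussDensity (x i) μ₁ S₁ + π₂ * gaussDensity (x i) μ₂ S₂))
        ≤ ∑ _i : Fin n, (Real.log K + Real.log G - (1/2) * L₁) :=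
          Finset.sum_le_sum (fun i _ => hA i)
      _ = (n : ℝ) * (Real.log K + Real.log G - (1/2) * L₁) := by
          rw [Finset.sum_const]; simp [nsmul_eq_mul]
      _ = (n : ℝ) * (Real.log K + Real.log G) - ((n : ℝ)/2) * L₁ := by ring
  -- Step B : KL(1,2) ≥ -p/2
  have h2 : -(p : ℝ)/2 ≤ gaussKL μ₁ S₁ μ₂ S₂ := by
    unfold gaussKL
    have hlog : 0 ≤ Real.log (S₂.det / S₁.det) :=
      Real.log_nonneg ((one_le_div hd₁).mpr hdet)
    have htr : 0 ≤ (S₂⁻¹ * S₁).trace :=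
      aux_trace_mul_nonneg hS₂.inv.posSemidef hS₁.posSemidef
    have hquad : 0 ≤ (μ₂ - μ₁) ⬝ᵥ (S₂⁻¹ *ᵥ (μ₂ - μ₁)) :=
      aux_quad_nonneg hS₂.inv.posSemidef _
    linarith
  have h2' : w₁ * (-(p : ℝ)/2) ≤ w₁ * gaussKL μ₁ S₁ μ₂ S₂ :=
    mul_le_mul_of_nonneg_left h2 hw₁
  -- Step C : lower bound for KL(2,1)
  have h3 : (1/2) * (L₁ - L₂ - (p : ℝ) + δ * T) ≤ gaussKL μ₂ S₂ μ₁ S₁ := by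
    unfold gaussKL
    have hlogdiv : Real.log (S₁.det / S₂.det) = L₁ - L₂ :=
      Real.log_div hd₁.ne' hd₂.ne'
    have hsplit : S₁⁻¹ * S₂ = S₁⁻¹ * (S₂ - δ • 1) + δ • S₁⁻¹ := by
      rw [Matrix.mul_sub, Matrix.mul_smul, Matrix.mul_one]
      abel
    have htr : δ * T ≤ (S₁⁻¹ * S₂).trace := by
      rw [hsplit, Matrix.trace_add, Matrix.trace_smul]
      have : 0 ≤ (S₁⁻¹ * (S₂ - δ • 1)).trace :=
        aux_trace_mul_nonneg hS₁.inv.posSemidef (aux_sub_smul_psd hS₂.1 h₂δ)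
      simp only [smul_eq_mul]
      linarith
    have hquad : 0 ≤ (μ₁ - μ₂) ⬝ᵥ (S₁⁻¹ *ᵥ (μ₁ - μ₂)) :=
      aux_quad_nonneg hS₁.inv.posSemidef _
    rw [hlogdiv]
    linarith
  have h3' : w₂ * ((1/2) * (L₁ - L₂ - (p : ℝ) + δ * T)) ≤ w₂ * gaussKL μ₂ S₂ μ₁ S₁ :=
    mul_le_mul_of_nonneg_left h3 hw₂.le
  -- Step D : -L₁ ≤ a*T - p - p*log a
  have h4 : -L₁ ≤ a * T - (p : ℝ) - (p : ℝ) * Real.log a := by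
    have hP : (a • S₁⁻¹).PosDef := aux_smul_posdef hS₁.inv ha
    have hld := aux_logdet_le hP
    have hdetinv : (S₁⁻¹).det = (S₁.det)⁻¹ := by
      rw [Matrix.det_nonsing_inv, Ring.inverse_eq_inv]
    have hdets : (a • S₁⁻¹).det = a ^ p * (S₁.det)⁻¹ := by
      rw [Matrix.det_smul, hdetinv]; simp
    have htrs : (a • S₁⁻¹).trace = a * T := by
      rw [Matrix.trace_smul]; simp [hT]
    rw [hdets, htrs, Real.log_mul (by positivity) (by positivity),
      Real.log_pow, Real.log_inv] at hld
    push_cast at hld ⊢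
    linarith
  have h4' : (((n : ℝ) + w₂) / 2) * (-L₁)
      ≤ (w₂ * δ / 2) * T + (((n : ℝ) + w₂) / 2) * (-(p : ℝ) - (p : ℝ) * Real.log a) := by
    have hmul := mul_le_mul_of_nonneg_left h4 (by positivity : (0:ℝ) ≤ ((n : ℝ) + w₂) / 2)
    have hca : (((n : ℝ) + w₂) / 2) * a = w₂ * δ / 2 := by
      rw [hadef]; field_simp
    calc (((n : ℝ) + w₂) / 2) * (-L₁)
        ≤ (((n : ℝ) + w₂) / 2) * (a * T - (p : ℝ) - (p : ℝ) * Real.log a) := hmul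
      _ = ((((n : ℝ) + w₂) / 2) * a) * T
          + (((n : ℝ) + w₂) / 2) * (-(p : ℝ) - (p : ℝ) * Real.log a) := by ring
      _ = (w₂ * δ / 2) * T + (((n : ℝ) + w₂) / 2) * (-(p : ℝ) - (p : ℝ) * Real.log a) := by
          rw [hca]
  -- Step E : bound on L₂
  have h5 : L₂ ≤ (p : ℝ) * Real.log c := by
    rw [hL₂]
    calc Real.log S₂.det ≤ Real.log (c ^ p) := Real.log_le_log hd₂ (aux_det_le hS₂ h₂c)
      _ = (p : ℝ) * Real.log c := by rw [Real.log_pow]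
  -- Final combination
  unfold siaObj
  have h5' : (w₂ / 2) * L₂ ≤ (w₂ / 2) * ((p : ℝ) * Real.log c) :=
    mul_le_mul_of_nonneg_left h5 (by positivity)
  linarith [h1, h2', h3', h4', h5']
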